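/- Suppose λ ∈ ℝ satisfies λ ≥ (D_k ∗̃ X)[t] for every k < K and t < T̃. Then the zero activation is optimal over the nonnegative orthant: for every z = (z_1,…,z_K) with all entries z_k[t] ≥ 0, one has F(0) ≤ F(z), where F(z) = (1/2)·‖X − Σ_{k<K} z_k ∗ D_k‖₂² + λ·Σ_{k<K} Σ_{t<T̃} z_k[t]. In particular there exists a value λ_max above which the solution of the Z-step subproblem is identically zero. -/

import Mathlib

open Finset

noncomputable section

/-- Convolution `(z ∗ D)[p,t] = Σ_{s+τ=t, s<T̃, τ<L} z[s]·D[p,τ]`. -/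
def conv (Ttil L : ℕ) (z : ℕ → ℝ) (D : ℕ → ℕ → ℝ) (p t : ℕ) : ℝ :=
  ∑ s ∈ range Ttil, ∑ τ ∈ range L, if s + τ = t then z s * D p τ else 0

/-- Correlation `(D ∗̃ α)[t] = Σ_{p<P} Σ_{τ<L} D[p,τ]·α[p,t+τ]`. -/
def corr (P L : ℕ) (D : ℕ → ℕ → ℝ) (α : ℕ → ℕ → ℝ) (t : ℕ) : ℝ :=
  ∑ p ∈ range P, ∑ τ ∈ range L, D p τ * α p (t + τ)

/-- The CSC objective on the nonnegative orthant,
`F(z) = (1/2)·‖X − Σ_k z_k ∗ D_k‖₂² + λ·Σ_k Σ_t z_k[t]` (with `T = T̃ + L − 1`). -/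
def cscObjNonneg (P K L Ttil : ℕ) (X : ℕ → ℕ → ℝ) (D : ℕ → ℕ → ℕ → ℝ) (lam : ℝ)
    (z : ℕ → ℕ → ℝ) : ℝ :=
  (1 / 2) * ∑ p ∈ range P, ∑ t ∈ range (Ttil + L - 1),
      (X p t - ∑ k ∈ range K, conv Ttil L (z k) (D k) p t) ^ 2
    + lam * ∑ k ∈ range K, ∑ t ∈ range Ttil, z k t

lemma inner_conv (P L Ttil : ℕ) (hL : 0 < L) (X : ℕ → ℕ → ℝ) (w : ℕ → ℝ) (Dk : ℕ → ℕ → ℝ) :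
    ∑ p ∈ range P, ∑ t ∈ range (Ttil + L - 1), X p t * conv Ttil L w Dk p t
      = ∑ s ∈ range Ttil, w s * corr P L Dk X s := by
  unfold conv corr
  have step : ∀ p, ∑ t ∈ range (Ttil + L - 1),
      X p t * (∑ s ∈ range Ttil, ∑ τ ∈ range L, if s + τ = t then w s * Dk p τ else 0)
      = ∑ s ∈ range Ttil, ∑ τ ∈ range L, X p (s + τ) * (w s * Dk p τ) := by
    intro p
    simp only [Finset.mul_sum, mul_ite, mul_zero]
    rw [Finset.sum_comm]
    refine Finset.sum_congr rfl fun s hs => ?_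
    rw [Finset.sum_comm]
    refine Finset.sum_congr rfl fun τ hτ => ?_
    rw [Finset.sum_ite_eq (range (Ttil + L - 1)) (s + τ) (fun t => X p t * (w s * Dk p τ))]
    simp only [Finset.mem_range] at hs hτ ⊢
    rw [if_pos (by omega)]
  simp only [step]
  rw [Finset.sum_comm]
  refine Finset.sum_congr rfl fun s _ => ?_
  rw [Finset.mul_sum]
  refine Finset.sum_congr rfl fun p _ => ?_
  rw [Finset.mul_sum]
  exact Finset.sum_congr rfl fun τ _ => by ring

/-- if `λ ≥ (D_k ∗̃ X)[t]` for all `k < K` and `t < T̃`, then the zero activation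
is optimal over the nonnegative orthant: `F(0) ≤ F(z)` for every componentwise nonnegative `z`. -/
theorem zero_optimal_above_lambda_max
    (P K L Ttil : ℕ) (hP : 0 < P) (hK : 0 < K) (hL : 0 < L) (hTtil : 0 < Ttil)
    (X : ℕ → ℕ → ℝ) (D : ℕ → ℕ → ℕ → ℝ) (lam : ℝ)
    (hlam : ∀ k < K, ∀ t < Ttil, corr P L (D k) X t ≤ lam) :
    ∀ z : ℕ → ℕ → ℝ, (∀ k < K, ∀ t < Ttil, 0 ≤ z k t) →
      cscObjNonneg P K L Ttil X D lam (fun _ _ => 0) ≤ cscObjNonneg P K L Ttil X D lam z := by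
  intro z hz
  set T := Ttil + L - 1 with hT
  set S : ℕ → ℕ → ℝ := fun p t => ∑ k ∈ range K, conv Ttil L (z k) (D k) p t with hS
  have hzero : cscObjNonneg P K L Ttil X D lam (fun _ _ => 0)
      = (1 / 2) * ∑ p ∈ range P, ∑ t ∈ range T, (X p t) ^ 2 := by
    unfold cscObjNonneg conv
    simp
    rfl
  have hFz : cscObjNonneg P K L Ttil X D lam z
      = (1 / 2) * ∑ p ∈ range P, ∑ t ∈ range T, (X p t - S p t) ^ 2
        + lam * ∑ k ∈ range K, ∑ t ∈ range Ttil, z k t := rfl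
  have expand : ∑ p ∈ range P, ∑ t ∈ range T, (X p t - S p t) ^ 2
      = (∑ p ∈ range P, ∑ t ∈ range T, (X p t) ^ 2)
        - 2 * (∑ p ∈ range P, ∑ t ∈ range T, X p t * S p t)
        + ∑ p ∈ range P, ∑ t ∈ range T, (S p t) ^ 2 := by
    have h : ∀ p t, (X p t - S p t) ^ 2
        = (X p t) ^ 2 - 2 * (X p t * S p t) + (S p t) ^ 2 := fun p t => by ring
    simp only [h, Finset.sum_add_distrib, Finset.sum_sub_distrib, ← Finset.mul_sum]
  have hB : ∑ p ∈ range P, ∑ t ∈ range T, X p t * S p t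
      = ∑ k ∈ range K, ∑ s ∈ range Ttil, z k s * corr P L (D k) X s := by
    simp only [hS, Finset.mul_sum]
    have h1 : ∀ p ∈ range P,
        ∑ t ∈ range T, ∑ k ∈ range K, X p t * conv Ttil L (z k) (D k) p t
        = ∑ k ∈ range K, ∑ t ∈ range T, X p t * conv Ttil L (z k) (D k) p t :=
      fun p _ => Finset.sum_comm
    rw [Finset.sum_congr rfl h1, Finset.sum_comm]
    exact Finset.sum_congr rfl fun k _ => inner_conv P L Ttil hL X (z k) (D k)
  have hBle : ∑ p ∈ range P, ∑ t ∈ range T, X p t * S p t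
      ≤ lam * ∑ k ∈ range K, ∑ t ∈ range Ttil, z k t := by
    rw [hB, Finset.mul_sum]
    refine Finset.sum_le_sum fun k hk => ?_
    rw [Finset.mul_sum]
    refine Finset.sum_le_sum fun s hs => ?_
    rw [Finset.mem_range] at hk hs
    have := hz k hk s hs
    calc z k s * corr P L (D k) X s ≤ z k s * lam :=
          mul_le_mul_of_nonneg_left (hlam k hk s hs) this
      _ = lam * z k s := by ring
  have hC : 0 ≤ ∑ p ∈ range P, ∑ t ∈ range T, (S p t) ^ 2 :=
    Finset.sum_nonneg fun p _ => Finset.sum_nonneg fun t _ => sq_nonneg _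
  rw [hzero, hFz, expand]
  linarith
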